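/- Let V be a representation of sl2 (over a field of characteristic zero) and let v be a vector such that e^k v = 0 and f^n v = 0 for some positive integers n, k, where (e,h,f) is the standard sl2-triple. Then the subrepresentation generated by v is finite-dimensional. -/

import Mathlib

set_option linter.unusedSectionVars false

open Polynomial

namespace Stmt2Aux

variable {K V : Type*} [Field K] [CharZero K] [AddCommGroup V] [Module K V]
variable {e h f : Module.End K V}

lemma he' (hhe : h * e - e * h = 2 • e) : e * h = (h - (2:K) • 1) * e := by
  have h1 : h * e = e * h + 2 • e := by rw [← hhe]; abel
  rw [sub_mul, smul_mul_assoc, one_mul, ofNat_smul_eq_nsmul, h1]; abel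

lemma fh' (hhf : h * f - f * h = -(2 • f)) : f * h = (h + (2:K) • 1) * f := by
  have h1 : f * h = h * f + 2 • f := by rw [sub_eq_iff_eq_add] at hhf; rw [hhf]; abel
  rw [add_mul, smul_mul_assoc, one_mul, ofNat_smul_eq_nsmul, h1]

lemma e_mul_pow_h (hhe : h * e - e * h = 2 • e) (b : ℕ) :
    e * h ^ b = (h - (2:K) • 1) ^ b * e := by
  induction b with
  | zero => simp
  | succ b ih => rw [pow_succ, ← mul_assoc, ih, mul_assoc, he' hhe, ← mul_assoc, ← pow_succ]

lemma f_mul_pow_h (hhf : h * f - f * h = -(2 • f)) (b : ℕ) :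
    f * h ^ b = (h + (2:K) • 1) ^ b * f := by
  induction b with
  | zero => simp
  | succ b ih => rw [pow_succ, ← mul_assoc, ih, mul_assoc, fh' hhf, ← mul_assoc, ← pow_succ]

lemma e_mul_aeval (hhe : h * e - e * h = 2 • e) (q : K[X]) :
    e * aeval h q = aeval h (q.comp (X - C 2)) * e := by
  induction q using Polynomial.induction_on' with
  | add p q hp hq => rw [map_add, mul_add, hp, hq, add_comp, map_add, add_mul]
  | monomial m a =>
      rw [monomial_comp, aeval_monomial, map_mul, aeval_C, map_pow, map_sub, aeval_X, aeval_C,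
        ← mul_assoc, ← Algebra.commutes a e, mul_assoc, e_mul_pow_h hhe, ← mul_assoc]
      congr 3

lemma f_mul_aeval (hhf : h * f - f * h = -(2 • f)) (q : K[X]) :
    f * aeval h q = aeval h (q.comp (X + C 2)) * f := by
  induction q using Polynomial.induction_on' with
  | add p q hp hq => rw [map_add, mul_add, hp, hq, add_comp, map_add, add_mul]
  | monomial m a =>
      rw [monomial_comp, aeval_monomial, map_mul, aeval_C, map_pow, map_add, aeval_X, aeval_C,
        ← mul_assoc, ← Algebra.commutes a f, mul_assoc, f_mul_pow_h hhf, ← mul_assoc]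
      congr 3

end Stmt2Aux

namespace Stmt2Aux
variable {K V : Type*} [Field K] [CharZero K] [AddCommGroup V] [Module K V]
variable {e h f : Module.End K V}

lemma shift_comp (q : K[X]) (a b : K) :
    (q.comp (X + C a)).comp (X + C b) = q.comp (X + C (a + b)) := by
  rw [comp_assoc, add_comp, X_comp, C_comp, add_assoc, ← C_add, add_comm b a]

lemma comp_add_sub (q : K[X]) : (q.comp (X + C 2)).comp (X - C 2) = q := by
  rw [comp_assoc, add_comp, X_comp, C_comp, sub_add_cancel, comp_X]

lemma aeval_mul_e (hhe : h * e - e * h = 2 • e) (q : K[X]) :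
    aeval h q * e = e * aeval h (q.comp (X + C 2)) := by
  rw [e_mul_aeval hhe, comp_add_sub]

lemma fpow_mul_aeval (hhf : h * f - f * h = -(2 • f)) (m : ℕ) (q : K[X]) :
    f ^ m * aeval h q = aeval h (q.comp (X + C (2 * (m : K)))) * f ^ m := by
  induction m with
  | zero => simp
  | succ m ih =>
      rw [pow_succ', mul_assoc, ih, ← mul_assoc, f_mul_aeval hhf, shift_comp, mul_assoc,
        ← pow_succ']
      norm_num
      ring_nf

lemma aeval_mul_epow (hhe : h * e - e * h = 2 • e) (q : K[X]) (c : ℕ) :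
    aeval h q * e ^ c = e ^ c * aeval h (q.comp (X + C (2 * (c : K)))) := by
  induction c with
  | zero => simp
  | succ c ih =>
      rw [pow_succ, ← mul_assoc, ih, mul_assoc, aeval_mul_e hhe, shift_comp, ← mul_assoc,
        ← pow_succ]
      norm_num
      ring_nf

end Stmt2Aux

namespace Stmt2Aux
variable {K V : Type*} [Field K] [CharZero K] [AddCommGroup V] [Module K V]
variable {e h f : Module.End K V}

lemma ef' (hef : e * f - f * e = h) : e * f = f * e + h := by rw [← hef]; abel

lemma hf' (hhf : h * f - f * h = -(2 • f)) : h * f = f * h - (2:K) • f := by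
  have h1 := fh' hhf
  rw [add_mul, smul_mul_assoc, one_mul] at h1
  rw [h1]; abel

lemma e_mul_fpow (hhf : h * f - f * h = -(2 • f)) (hef : e * f - f * e = h) (m : ℕ) :
    e * f ^ (m + 1) = f ^ (m + 1) * e + ((m : K) + 1) • (f ^ m * h)
      - ((m : K) * ((m : K) + 1)) • f ^ m := by
  induction m with
  | zero => simp [ef' hef]
  | succ m ih =>
      have : e * f ^ (m + 1 + 1) = (e * f ^ (m + 1)) * f := by rw [mul_assoc, ← pow_succ]
      rw [this, ih, sub_mul, add_mul, smul_mul_assoc, smul_mul_assoc, mul_assoc, mul_assoc,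
        ← pow_succ, ef' hef, hf' hhf, mul_add, mul_sub, ← mul_assoc, ← pow_succ, mul_smul_comm]
      rw [← mul_assoc (f^m) f h, ← pow_succ f m]
      push_cast
      module

end Stmt2Aux

namespace Stmt2Aux
variable {K V : Type*} [Field K] [CharZero K] [AddCommGroup V] [Module K V]
variable {e h f : Module.End K V}

lemma lemA (hhf : h * f - f * h = -(2 • f)) (hef : e * f - f * e = h)
    {m : ℕ} {v : V} (hv : (f ^ m) v = 0) : (f ^ (m + 1)) (e v) = 0 := by
  have h0 : (f ^ (m + 1)) v = 0 := by
    rw [pow_succ', Module.End.mul_apply, hv, map_zero]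
  have h1 : (f ^ m) (h v) = 0 := by
    have h2 := LinearMap.congr_fun (fpow_mul_aeval hhf m X) v
    simp only [Module.End.mul_apply, aeval_X] at h2
    rw [h2, hv, map_zero]
  have h2 := LinearMap.congr_fun (e_mul_fpow hhf hef (e := e) m) v
  simp only [Module.End.mul_apply, LinearMap.add_apply, LinearMap.sub_apply,
    LinearMap.smul_apply, h0, h1, hv, map_zero, smul_zero, add_zero, sub_zero,
    zero_add] at h2
  exact h2.symm

lemma lemA' (hhf : h * f - f * h = -(2 • f)) (hef : e * f - f * e = h)
    {n : ℕ} {v : V} (hfn : (f ^ n) v = 0) (c : ℕ) : (f ^ (n + c)) ((e ^ c) v) = 0 := by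
  induction c with
  | zero => simpa using hfn
  | succ c ih =>
      have h1 : (e ^ (c + 1)) v = e ((e ^ c) v) := by
        rw [pow_succ', Module.End.mul_apply]
      rw [h1, show n + (c + 1) = (n + c) + 1 by ring]
      exact lemA hhf hef ih

lemma lemB (hhe : h * e - e * h = 2 • e) (hhf : h * f - f * h = -(2 • f))
    (hef : e * f - f * e = h) :
    ∀ (n : ℕ) (v : V), e v = 0 → (f ^ n) v = 0 →
      aeval h (∏ j ∈ Finset.range n, (X - C (j : K))) v = 0 := by
  intro n
  induction n with
  | zero =>
      intro v hev hfv
      simp only [pow_zero, Module.End.one_apply] at hfv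
      simp [hfv]
  | succ n ih =>
      intro v hev hfv
      set w := h v - (n : K) • v with hw
      have hew : e w = 0 := by
        have h3 := LinearMap.congr_fun (he' hhe) v
        simp only [Module.End.mul_apply] at h3
        rw [hw, map_sub, map_smul, hev, smul_zero, sub_zero, h3, hev, map_zero]
      have hfw : (f ^ n) w = 0 := by
        have h2 := LinearMap.congr_fun (e_mul_fpow hhf hef (e := e) n) v
        simp only [Module.End.mul_apply, LinearMap.add_apply, LinearMap.sub_apply,
          LinearMap.smul_apply, hfv, map_zero, hev, smul_zero, zero_add] at h2
        -- h2 : 0 = (n+1) • (f^n (h v)) - (n*(n+1)) • (f^n v)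
        have h4 : ((n : K) + 1) • ((f ^ n) w) = 0 := by
          rw [hw, map_sub, map_smul, smul_sub, smul_smul]
          rw [show ((n:K)+1) * (n:K) = (n:K) * ((n:K)+1) by ring]
          exact h2.symm
        have h5 : ((n : K) + 1) ≠ 0 := Nat.cast_add_one_ne_zero n
        exact (smul_eq_zero.mp h4).resolve_left h5
      have hiw := ih w hew hfw
      rw [Finset.prod_range_succ, map_mul, Module.End.mul_apply]
      have h6 : aeval h (X - C (n : K)) v = w := by
        rw [map_sub, aeval_X, aeval_C, LinearMap.sub_apply, Module.algebraMap_end_apply, hw]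
      rw [h6, hiw]

end Stmt2Aux

namespace Stmt2Aux
variable {K V : Type*} [Field K] [CharZero K] [AddCommGroup V] [Module K V]
variable {e h f : Module.End K V}

lemma lemB' (hhe : h * e - e * h = 2 • e) (hhf : h * f - f * h = -(2 • f))
    (hef : e * f - f * e = h) :
    ∀ (k : ℕ) {n : ℕ} {v : V}, (e ^ k) v = 0 → (f ^ n) v = 0 →
      ∃ p : K[X], p.Monic ∧ 0 < p.natDegree ∧ aeval h p v = 0 := by
  intro k
  induction k with
  | zero =>
      intro n v hek _
      simp only [pow_zero, Module.End.one_apply] at hek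
      exact ⟨X, monic_X, by simp [natDegree_X], by rw [aeval_X, hek, map_zero]⟩
  | succ k ih =>
      intro n v hek hfn
      have heu : (e ^ k) (e v) = 0 := by
        rw [← Module.End.mul_apply, ← pow_succ]; exact hek
      have hfu : (f ^ (n + 1)) (e v) = 0 := lemA hhf hef hfn
      obtain ⟨p, hmp, hdp, hp⟩ := ih heu hfu
      set p₂ := p.comp (X + C (2 : K)) with hp₂
      have hmp₂ : p₂.Monic := hmp.comp_X_add_C 2
      have hdp₂ : 0 < p₂.natDegree := by
        rw [hp₂, natDegree_comp, natDegree_X_add_C, mul_one]; exact hdp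
      have hev₁ : e (aeval h p₂ v) = 0 := by
        have h1 := LinearMap.congr_fun (e_mul_aeval hhe p₂) v
        simp only [Module.End.mul_apply] at h1
        rw [h1, hp₂, comp_add_sub, hp]
      have hfv₁ : (f ^ n) (aeval h p₂ v) = 0 := by
        have h1 := LinearMap.congr_fun (fpow_mul_aeval hhf n p₂) v
        simp only [Module.End.mul_apply] at h1
        rw [h1, hfn, map_zero]
      have hQ := lemB hhe hhf hef n (aeval h p₂ v) hev₁ hfv₁
      refine ⟨(∏ j ∈ Finset.range n, (X - C (j : K))) * p₂,
        (monic_prod_of_monic _ _ fun i _ => monic_X_sub_C _).mul hmp₂, ?_, ?_⟩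
      · rw [(monic_prod_of_monic _ _ fun i _ => monic_X_sub_C (R := K) _).natDegree_mul hmp₂]
        omega
      · rw [map_mul, Module.End.mul_apply, hQ]

end Stmt2Aux

open Stmt2Aux in
/-- If v is a vector in an sl2-representation with e^k v = 0 and f^n v = 0
for some positive integers k, n, then the subrepresentation generated by v is
finite-dimensional (i.e. v lies in some finite-dimensional invariant submodule). -/
theorem stmt2 {K V : Type*} [Field K] [CharZero K] [AddCommGroup V] [Module K V]
    (e h f : Module.End K V)
    (hhe : h * e - e * h = 2 • e)
    (hhf : h * f - f * h = -(2 • f))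
    (hef : e * f - f * e = h)
    (v : V) (k n : ℕ) (hk : 0 < k) (hn : 0 < n)
    (hek : (e ^ k) v = 0) (hfn : (f ^ n) v = 0) :
    ∃ W : Submodule K V, v ∈ W ∧ (∀ x ∈ W, e x ∈ W) ∧ (∀ x ∈ W, h x ∈ W) ∧
      (∀ x ∈ W, f x ∈ W) ∧ FiniteDimensional K W := by
  classical
  obtain ⟨p, hmp, hdp, hpv⟩ := lemB' hhe hhf hef k hek hfn
  set d := p.natDegree with hd
  set S : Set V :=
    Set.range (fun t : Fin (n + k) × Fin d × Fin k =>
      (f ^ (t.1 : ℕ)) ((h ^ (t.2.1 : ℕ)) ((e ^ (t.2.2 : ℕ)) v))) with hS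
  set W := Submodule.span K S with hW
  have hann : ∀ c : ℕ, aeval h (p.comp (X - C (2 * (c : K)))) ((e ^ c) v) = 0 := by
    intro c
    have h1 := LinearMap.congr_fun (aeval_mul_epow hhe (p.comp (X - C (2 * (c : K)))) c) v
    simp only [Module.End.mul_apply] at h1
    have h2 : (p.comp (X - C (2 * (c : K)))).comp (X + C (2 * (c : K))) = p := by
      rw [sub_eq_add_neg, ← map_neg C, shift_comp, neg_add_cancel, map_zero, add_zero, comp_X]
    rw [h1, h2, hpv, map_zero]
  have key : ∀ (a c : ℕ) (q : K[X]), (f ^ a) (aeval h q ((e ^ c) v)) ∈ W := by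
    intro a c q
    rcases lt_or_ge c k with hc | hc
    · rcases lt_or_ge a (n + c) with ha | ha
      · set qc := p.comp (X - C (2 * (c : K))) with hqc
        have hmqc : qc.Monic := hmp.comp_X_sub_C _
        have hdqc : qc.natDegree = d := by
          rw [hqc, natDegree_comp, natDegree_X_sub_C, mul_one]
        have hmod : aeval h q ((e ^ c) v) = aeval h (q %ₘ qc) ((e ^ c) v) := by
          conv_lhs => rw [← modByMonic_add_div q qc, mul_comm qc]
          rw [map_add, map_mul, LinearMap.add_apply, Module.End.mul_apply, hann c,
            map_zero, add_zero]
        have hdr : (q %ₘ qc).natDegree < d := by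
          by_cases h0 : q %ₘ qc = 0
          · rw [h0, natDegree_zero]; omega
          · exact hdqc ▸ natDegree_lt_natDegree h0 (degree_modByMonic_lt q hmqc)
        rw [hmod, aeval_eq_sum_range' hdr, LinearMap.sum_apply, map_sum]
        refine Submodule.sum_mem _ fun i hi => ?_
        rw [LinearMap.smul_apply, map_smul]
        refine Submodule.smul_mem _ _ (Submodule.subset_span ?_)
        exact ⟨(⟨a, by omega⟩, ⟨i, Finset.mem_range.mp hi⟩, ⟨c, hc⟩), rfl⟩
      · have h2 : (f ^ a) ((e ^ c) v) = 0 := by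
          have h3 := lemA' hhf hef hfn c
          have h4 : f ^ a = f ^ (a - (n + c)) * f ^ (n + c) := by
            rw [← pow_add, Nat.sub_add_cancel ha]
          rw [h4, Module.End.mul_apply, h3, map_zero]
        have h1 := LinearMap.congr_fun (fpow_mul_aeval hhf a q) ((e ^ c) v)
        simp only [Module.End.mul_apply] at h1
        rw [h1, h2, map_zero]
        exact zero_mem _
    · have h2 : (e ^ c) v = 0 := by
        have h4 : e ^ c = e ^ (c - k) * e ^ k := by
          rw [← pow_add, Nat.sub_add_cancel hc]
        rw [h4, Module.End.mul_apply, hek, map_zero]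
      rw [h2, map_zero, map_zero]
      exact zero_mem _
  have key' : ∀ (a c b : ℕ), (f ^ a) ((h ^ b) ((e ^ c) v)) ∈ W := by
    intro a c b
    have := key a c (X ^ b)
    rwa [aeval_X_pow] at this
  have hvW : v ∈ W := by
    have hv0 : v = (f ^ (0:ℕ)) ((h ^ (0:ℕ)) ((e ^ (0:ℕ)) v)) := by simp
    rw [hv0]
    exact Submodule.subset_span ⟨(⟨0, by omega⟩, ⟨0, hdp⟩, ⟨0, hk⟩), rfl⟩
  have stab : ∀ (T : Module.End K V), (∀ s ∈ S, T s ∈ W) → ∀ x ∈ W, T x ∈ W := by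
    intro T hT x hx
    have hle : Submodule.span K S ≤ W.comap T := Submodule.span_le.mpr hT
    exact hle hx
  have gen_e : ∀ (a c b : ℕ), e ((f ^ a) ((h ^ b) ((e ^ c) v))) ∈ W := by
    intro a c b
    have hx0 : e ((h ^ b) ((e ^ c) v)) = aeval h (((X - C 2 : K[X])) ^ b) ((e ^ (c+1)) v) := by
      have h1 := LinearMap.congr_fun (e_mul_aeval hhe (X ^ b : K[X])) ((e ^ c) v)
      simp only [Module.End.mul_apply, aeval_X_pow, X_pow_comp] at h1
      rw [h1, pow_succ', Module.End.mul_apply]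
    cases a with
    | zero =>
        simp only [pow_zero, Module.End.one_apply]
        rw [hx0]
        have := key 0 (c+1) (((X - C 2 : K[X])) ^ b)
        rwa [pow_zero, Module.End.one_apply] at this
    | succ m =>
        have h2 := LinearMap.congr_fun (e_mul_fpow hhf hef m) ((h ^ b) ((e ^ c) v))
        simp only [Module.End.mul_apply, LinearMap.add_apply, LinearMap.sub_apply,
          LinearMap.smul_apply] at h2
        rw [h2]
        have t1 : (f ^ (m+1)) (e ((h ^ b) ((e ^ c) v))) ∈ W := by
          rw [hx0]; exact key (m+1) (c+1) (((X - C 2 : K[X])) ^ b)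
        have t2 : (f ^ m) (h ((h ^ b) ((e ^ c) v))) ∈ W := by
          have h3 : h ((h ^ b) ((e ^ c) v)) = (h ^ (b+1)) ((e ^ c) v) := by
            rw [pow_succ', Module.End.mul_apply]
          rw [h3]; exact key' m c (b+1)
        exact sub_mem (add_mem t1 (Submodule.smul_mem _ _ t2))
          (Submodule.smul_mem _ _ (key' m c b))
  have gen_h : ∀ (a c b : ℕ), h ((f ^ a) ((h ^ b) ((e ^ c) v))) ∈ W := by
    intro a c b
    have h1 := LinearMap.congr_fun (fpow_mul_aeval hhf a (X : K[X])) ((h ^ b) ((e ^ c) v))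
    simp only [Module.End.mul_apply, aeval_X, X_comp, map_add, aeval_C,
      LinearMap.add_apply, Module.algebraMap_end_apply] at h1
    have h3 : h ((h ^ b) ((e ^ c) v)) = (h ^ (b+1)) ((e ^ c) v) := by
      rw [pow_succ', Module.End.mul_apply]
    have h4 : h ((f ^ a) ((h ^ b) ((e ^ c) v)))
        = (f ^ a) ((h ^ (b+1)) ((e ^ c) v))
          - (2 * (a : K)) • (f ^ a) ((h ^ b) ((e ^ c) v)) := by
      rw [← h3, h1]
      abel
    rw [h4]
    exact sub_mem (key' a c (b+1)) (Submodule.smul_mem _ _ (key' a c b))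
  have gen_f : ∀ (a c b : ℕ), f ((f ^ a) ((h ^ b) ((e ^ c) v))) ∈ W := by
    intro a c b
    have h1 : f ((f ^ a) ((h ^ b) ((e ^ c) v))) = (f ^ (a+1)) ((h ^ b) ((e ^ c) v)) := by
      rw [pow_succ', Module.End.mul_apply]
    rw [h1]
    exact key' (a+1) c b
  refine ⟨W, hvW, ?_, ?_, ?_, FiniteDimensional.span_of_finite K (Set.finite_range _)⟩
  · exact stab e (by rintro s ⟨⟨a, b, c⟩, rfl⟩; exact gen_e a c b)
  · exact stab h (by rintro s ⟨⟨a, b, c⟩, rfl⟩; exact gen_h a c b)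
  · exact stab f (by rintro s ⟨⟨a, b, c⟩, rfl⟩; exact gen_f a c b)
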